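/- Characterization of the natural domain Ω: (a) If z ∈ [0,1] and φ is a simple martingale on a probability space with F_0 trivial such that φ_0 = x, E φ_∞² = y, and (Sφ)² ≤ 1 − z² almost surely, then x² ≤ y ≤ 1 − z² + x²; moreover E φ_∞² − (E φ_∞)² = E (Sφ)². (b) Conversely, on any atomless probability space, for every (x, y, z) ∈ Ω = {(x,y,z) ∈ ℝ³ : x² ≤ y ≤ 1 − z² + x², z ∈ [0,1]} there exist a filtration with F_0 trivial and a simple martingale φ adapted to it with φ_0 = x, E φ_∞² = y, and (Sφ)² ≤ 1 − z² almost surely. -/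

import Mathlib

open MeasureTheory Filter Set
open scoped ENNReal

section Aux

variable {X : Type*} {m : MeasurableSpace X} {μ : Measure X}

/-- From the splitting property, positive-measure sets contain subsets of
measure at most half. -/
lemma exists_half_le_subset [IsFiniteMeasure μ]
    (hsplit : ∀ s : Set X, MeasurableSet s → 0 < μ s →
        ∃ t : Set X, t ⊆ s ∧ MeasurableSet t ∧ 0 < μ t ∧ μ t < μ s)
    {s : Set X} (hs : MeasurableSet s) (h0 : 0 < μ s) :
    ∃ t, t ⊆ s ∧ MeasurableSet t ∧ 0 < μ t ∧ μ t ≤ μ s / 2 := by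
  obtain ⟨u, hus, hum, hu0, hult⟩ := hsplit s hs h0
  by_cases hle : μ u ≤ μ s / 2
  · exact ⟨u, hus, hum, hu0, hle⟩
  · refine ⟨s \ u, diff_subset, hs.diff hum, ?_, ?_⟩
    · have : μ (s \ u) = μ s - μ u := measure_diff hus hum.nullMeasurableSet (measure_ne_top μ u)
      rw [this]
      exact tsub_pos_iff_lt.mpr hult
    · have h1 : μ (s \ u) = μ s - μ u := measure_diff hus hum.nullMeasurableSet (measure_ne_top μ u)
      rw [h1]
      have h2 : μ s / 2 ≤ μ u := le_of_not_ge hle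
      calc μ s - μ u ≤ μ s - μ s / 2 := tsub_le_tsub_left h2 _
        _ = μ s / 2 := ENNReal.sub_half (measure_ne_top μ s)

/-- Arbitrarily small positive-measure subsets exist. -/
lemma exists_small_subset [IsProbabilityMeasure μ]
    (hsplit : ∀ s : Set X, MeasurableSet s → 0 < μ s →
        ∃ t : Set X, t ⊆ s ∧ MeasurableSet t ∧ 0 < μ t ∧ μ t < μ s)
    {s : Set X} (hs : MeasurableSet s) (h0 : 0 < μ s) {ε : ℝ≥0∞} (hε : 0 < ε) :
    ∃ t, t ⊆ s ∧ MeasurableSet t ∧ 0 < μ t ∧ μ t < ε := by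
  have key : ∀ n : ℕ, ∃ t, t ⊆ s ∧ MeasurableSet t ∧ 0 < μ t ∧ μ t ≤ μ s * 2⁻¹ ^ n := by
    intro n
    induction n with
    | zero => exact ⟨s, subset_rfl, hs, h0, by simp⟩
    | succ n ih =>
      obtain ⟨t, hts, htm, ht0, htb⟩ := ih
      obtain ⟨u, hut, hum, hu0, hub⟩ := exists_half_le_subset hsplit htm ht0
      refine ⟨u, hut.trans hts, hum, hu0, ?_⟩
      calc μ u ≤ μ t / 2 := hub
        _ ≤ μ s * 2⁻¹ ^ n / 2 := by gcongr
        _ = μ s * 2⁻¹ ^ (n + 1) := by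
          rw [pow_succ, div_eq_mul_inv, mul_assoc]
  obtain ⟨n, hn⟩ := ENNReal.exists_inv_two_pow_lt hε.ne'
  obtain ⟨t, hts, htm, ht0, htb⟩ := key n
  refine ⟨t, hts, htm, ht0, lt_of_le_of_lt ?_ hn⟩
  calc μ t ≤ μ s * 2⁻¹ ^ n := htb
    _ ≤ 1 * 2⁻¹ ^ n := by
      gcongr
      exact prob_le_one
    _ = 2⁻¹ ^ n := one_mul _


lemma exists_measure_half [IsProbabilityMeasure μ]
    (hsplit : ∀ s : Set X, MeasurableSet s → 0 < μ s →
        ∃ t : Set X, t ⊆ s ∧ MeasurableSet t ∧ 0 < μ t ∧ μ t < μ s) :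
    ∃ A : Set X, MeasurableSet A ∧ μ A = 1 / 2 := by
  set c : ℝ≥0∞ := 1 / 2 with hc
  have hcne : c ≠ ∞ := by simp [hc]
  -- the greedy step
  have hstep : ∀ A : Set X, MeasurableSet A → μ A ≤ c →
      ∃ t : Set X, MeasurableSet t ∧ t ⊆ Aᶜ ∧ μ t ≤ c - μ A ∧
        sSup (μ '' {u | MeasurableSet u ∧ u ⊆ Aᶜ ∧ μ u ≤ c - μ A}) ≤ 2 * μ t := by
    intro A hA hAc
    set S : Set ℝ≥0∞ := μ '' {u | MeasurableSet u ∧ u ⊆ Aᶜ ∧ μ u ≤ c - μ A} with hS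
    have hSle : ∀ v ∈ S, v ≤ c - μ A := by
      rintro v ⟨u, hu, rfl⟩; exact hu.2.2
    have hsup_le : sSup S ≤ c - μ A := sSup_le hSle
    have hsup_ne : sSup S ≠ ∞ := fun h => hcne (top_le_iff.mp (h ▸ hsup_le.trans (tsub_le_self.trans le_rfl)) ▸ rfl)
    by_cases hr : sSup S = 0
    · exact ⟨∅, MeasurableSet.empty, empty_subset _, by simp, by simp [hr]⟩
    · have h2 : sSup S / 2 < sSup S := ENNReal.half_lt_self hr hsup_ne
      obtain ⟨v, hvS, hv⟩ := lt_sSup_iff.mp h2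
      obtain ⟨u, hu, rfl⟩ := hvS
      refine ⟨u, hu.1, hu.2.1, hu.2.2, ?_⟩
      calc sSup S = 2 * (sSup S / 2) := (ENNReal.mul_div_cancel (by norm_num) (by norm_num)).symm
        _ ≤ 2 * μ u := mul_le_mul_right hv.le 2
  choose T hT1 hT2 hT3 hT4 using hstep
  -- iterate
  let step : {A : Set X // MeasurableSet A ∧ μ A ≤ c} → {A : Set X // MeasurableSet A ∧ μ A ≤ c} :=
    fun p => ⟨p.1 ∪ T p.1 p.2.1 p.2.2,
      p.2.1.union (hT1 p.1 p.2.1 p.2.2), by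
        have hdisj : Disjoint p.1 (T p.1 p.2.1 p.2.2) :=
          subset_compl_iff_disjoint_left.mp (hT2 p.1 p.2.1 p.2.2)
        rw [measure_union hdisj (hT1 p.1 p.2.1 p.2.2)]
        calc μ p.1 + μ (T p.1 p.2.1 p.2.2) ≤ μ p.1 + (c - μ p.1) :=
              add_le_add_right (hT3 p.1 p.2.1 p.2.2) _
          _ = c := add_tsub_cancel_of_le p.2.2⟩
  obtain ⟨seq, hseq0, hseqS⟩ :
      ∃ seq : ℕ → {A : Set X // MeasurableSet A ∧ μ A ≤ c},
        seq 0 = ⟨∅, MeasurableSet.empty, by simp⟩ ∧ ∀ n, seq (n + 1) = step (seq n) :=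
    ⟨fun n => Nat.rec ⟨∅, MeasurableSet.empty, by simp⟩ (fun _ p => step p) n, rfl, fun _ => rfl⟩
  have hmono : Monotone fun n => (seq n).1 := by
    apply monotone_nat_of_le_succ
    intro n
    rw [hseqS n]
    exact subset_union_left
  have hrec : ∀ n, μ (seq (n + 1)).1
      = μ (seq n).1 + μ (T (seq n).1 (seq n).2.1 (seq n).2.2) := by
    intro n
    rw [hseqS n]
    exact measure_union (subset_compl_iff_disjoint_left.mp (hT2 _ _ _)) (hT1 _ _ _)
  set A : Set X := ⋃ n, (seq n).1 with hA
  have hAm : MeasurableSet A := MeasurableSet.iUnion fun n => (seq n).2.1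
  have hsub : ∀ n, (seq n).1 ⊆ A := fun n => subset_iUnion (fun n => (seq n).1) n
  have hAsup : μ A = ⨆ n, μ (seq n).1 := (hmono.directed_le).measure_iUnion
  have hAc : μ A ≤ c := by
    rw [hAsup]; exact iSup_le fun n => (seq n).2.2
  refine ⟨A, hAm, ?_⟩
  by_contra hne
  have hlt : μ A < c := lt_of_le_of_ne hAc hne
  have hε : 0 < c - μ A := tsub_pos_iff_lt.mpr hlt
  have hcompl : 0 < μ Aᶜ := by
    rw [measure_compl hAm (measure_ne_top μ A), measure_univ]
    apply tsub_pos_iff_lt.mpr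
    calc μ A < c := hlt
      _ < 1 := by rw [hc]; norm_num
  obtain ⟨t, hts, htm, ht0, htb⟩ := exists_small_subset hsplit hAm.compl hcompl hε
  -- for every n, `t` witnesses that the sup at stage n is at least μ t
  have hkey : ∀ n, μ t ≤ 2 * μ (T (seq n).1 (seq n).2.1 (seq n).2.2) := by
    intro n
    refine le_trans ?_ (hT4 (seq n).1 (seq n).2.1 (seq n).2.2)
    apply le_sSup
    refine ⟨t, ⟨htm, ?_, ?_⟩, rfl⟩
    · exact hts.trans (compl_subset_compl.mpr (hsub n))
    · exact le_trans htb.le (tsub_le_tsub_left (measure_mono (hsub n)) c)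
  set b : ℝ≥0∞ := μ t / 2 with hb
  have hb0 : b ≠ 0 := by
    simp [hb, ENNReal.div_eq_zero_iff, ht0.ne']
  have hbt : b ≠ ∞ := by
    simp only [hb]
    exact (ENNReal.div_lt_top (measure_ne_top μ t) (by norm_num)).ne
  have hgrow : ∀ n : ℕ, (n : ℝ≥0∞) * b ≤ μ (seq n).1 := by
    intro n
    induction n with
    | zero => simp
    | succ n ih =>
      rw [hrec n]
      push_cast
      rw [add_mul, one_mul]
      refine add_le_add ih ?_
      exact ENNReal.div_le_of_le_mul (by rw [mul_comm]; exact hkey n)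
  obtain ⟨n, hn⟩ := ENNReal.exists_nat_gt (ENNReal.div_lt_top hcne hb0).ne
  have : c < (n : ℝ≥0∞) * b := by
    calc c = c / b * b := (ENNReal.div_mul_cancel hb0 hbt).symm
      _ < (n : ℝ≥0∞) * b := ENNReal.mul_lt_mul_left hb0 hbt hn  -- check direction
  exact absurd ((hgrow n).trans (seq n).2.2) (not_le.mpr this)


lemma part_a [IsProbabilityMeasure μ]
    (ℱ : Filtration ℕ m) (hℱ0 : ℱ 0 = ⊥)
    (φ : ℕ → X → ℝ) (hφ : Martingale φ ℱ μ)
    (N : ℕ) (hstat : ∀ n, N ≤ n → φ n = φ N)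
    (x y z : ℝ) (hz0 : 0 ≤ z) (hz1 : z ≤ 1)
    (hφ0 : φ 0 = fun _ => x)
    (hy : (∫ ω, (φ N ω) ^ 2 ∂μ) = y)
    (hS : ∀ᵐ ω ∂μ, (∑' n, (φ (n + 1) ω - φ n ω) ^ 2) ≤ 1 - z ^ 2) :
    x ^ 2 ≤ y ∧ y ≤ 1 - z ^ 2 + x ^ 2 ∧
      (∫ ω, (φ N ω) ^ 2 ∂μ) - (∫ ω, φ N ω ∂μ) ^ 2 =
        ∫ ω, (∑' n, (φ (n + 1) ω - φ n ω) ^ 2) ∂μ := by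
  classical
  set d : ℕ → X → ℝ := fun n ω => φ (n + 1) ω - φ n ω with hd
  have hd0 : ∀ n, N ≤ n → ∀ ω, d n ω = 0 := by
    intro n hn ω
    show φ (n + 1) ω - φ n ω = 0
    rw [hstat (n + 1) (by omega), hstat n hn, sub_self]
  have htsum : ∀ ω, (∑' n, (φ (n + 1) ω - φ n ω) ^ 2)
      = ∑ i ∈ Finset.range N, d i ω ^ 2 := by
    intro ω
    apply tsum_eq_sum
    intro i hi
    have : d i ω = 0 := hd0 i (Nat.le_of_not_lt (by simpa using hi)) ω
    show d i ω ^ 2 = 0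
    rw [this]; ring
  have hint : ∀ n, Integrable (φ n) μ := hφ.integrable
  have hmeasφ : ∀ n, StronglyMeasurable[m] (φ n) := fun n =>
    (hφ.stronglyMeasurable n).mono (ℱ.le n)
  have hdint : ∀ n, Integrable (d n) μ := fun n => (hint (n + 1)).sub (hint n)
  have hdmeas : ∀ n, StronglyMeasurable[m] (d n) := fun n => (hmeasφ (n + 1)).sub (hmeasφ n)
  have hmean : ∀ n, ∫ ω, φ n ω ∂μ = x := by
    intro n
    have h := hφ.condExp_ae_eq (Nat.zero_le n)
    rw [hℱ0, condExp_bot, hφ0] at h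
    obtain ⟨ω, hω⟩ := h.exists
    exact hω
  have hS' : ∀ᵐ ω ∂μ, ∑ i ∈ Finset.range N, d i ω ^ 2 ≤ 1 - z ^ 2 := by
    filter_upwards [hS] with ω hω
    rw [htsum ω] at hω
    exact hω
  have hb : ∀ i, i < N → ∀ᵐ ω ∂μ, |d i ω| ≤ 1 := by
    intro i hiN
    filter_upwards [hS'] with ω hω
    have h1 : d i ω ^ 2 ≤ ∑ j ∈ Finset.range N, d j ω ^ 2 :=
      Finset.single_le_sum (fun j _ => sq_nonneg (d j ω)) (Finset.mem_range.mpr hiN)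
    have h2 : d i ω ^ 2 ≤ 1 := by nlinarith [sq_nonneg z]
    exact (sq_le_one_iff_abs_le_one (d i ω)).mp h2
  have hprod_int : ∀ i ∈ Finset.range N, ∀ j ∈ Finset.range N,
      Integrable (fun ω => d i ω * d j ω) μ := by
    intro i hi j hj
    refine ⟨((hdmeas i).mul (hdmeas j)).aestronglyMeasurable,
      HasFiniteIntegral.of_bounded (C := 1) ?_⟩
    filter_upwards [hb i (Finset.mem_range.mp hi), hb j (Finset.mem_range.mp hj)] with ω h1 h2
    rw [Real.norm_eq_abs, abs_mul]
    exact mul_le_one₀ h1 (abs_nonneg _) h2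
  have hsq_int : ∀ i ∈ Finset.range N, Integrable (fun ω => d i ω ^ 2) μ := by
    intro i hi
    have := hprod_int i hi i hi
    simpa [← pow_two] using this
  have horth : ∀ i j, i < j → j < N → ∫ ω, d i ω * d j ω ∂μ = 0 := by
    intro i j hij hjN
    have hij' : i + 1 ≤ j := hij
    have hdi : StronglyMeasurable[ℱ j] (d i) :=
      ((hφ.stronglyMeasurable (i + 1)).mono (ℱ.mono hij')).sub
        ((hφ.stronglyMeasurable i).mono (ℱ.mono (le_of_lt hij)))
    have hdj0 : μ[d j | ℱ j] =ᵐ[μ] 0 := by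
      have h1 : μ[d j | ℱ j] =ᵐ[μ] μ[φ (j + 1)|ℱ j] - μ[φ j|ℱ j] :=
        condExp_sub (hint (j + 1)) (hint j) _
      have h2 := hφ.condExp_ae_eq (Nat.le_succ j)
      have h3 := hφ.condExp_ae_eq (le_refl j)
      filter_upwards [h1, h2, h3] with ω e1 e2 e3
      simp only [Pi.sub_apply] at e1
      simp only [Pi.zero_apply]
      rw [e1, e2, e3, sub_self]
    have hprodij : Integrable (fun ω => d i ω * d j ω) μ :=
      hprod_int i (Finset.mem_range.mpr (hij.trans hjN)) j (Finset.mem_range.mpr hjN)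
    have hmul : μ[fun ω => d i ω * d j ω | ℱ j] =ᵐ[μ] fun ω => d i ω * (μ[d j|ℱ j]) ω := by
      have := condExp_mul_of_stronglyMeasurable_left hdi hprodij (hdint j)
      filter_upwards [this] with ω e
      exact e
    calc ∫ ω, d i ω * d j ω ∂μ
        = ∫ ω, (μ[fun ω => d i ω * d j ω|ℱ j]) ω ∂μ := (integral_condExp (ℱ.le j)).symm
      _ = ∫ ω, d i ω * (μ[d j|ℱ j]) ω ∂μ := integral_congr_ae hmul
      _ = ∫ _ω, (0 : ℝ) ∂μ := by
          apply integral_congr_ae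
          filter_upwards [hdj0] with ω h
          simp only [Pi.zero_apply] at h
          rw [h, mul_zero]
      _ = 0 := integral_zero _ _
  -- telescoping
  have hφN : ∀ ω, φ N ω = x + ∑ i ∈ Finset.range N, d i ω := by
    intro ω
    have h := Finset.sum_range_sub (fun n => φ n ω) N
    have h0 : φ 0 ω = x := congrFun hφ0 ω
    have heq : ∑ i ∈ Finset.range N, d i ω = ∑ i ∈ Finset.range N, (φ (i + 1) ω - φ i ω) :=
      Finset.sum_congr rfl fun i _ => rfl
    rw [heq, h, h0]
    ring
  set G : X → ℝ := fun ω => ∑ i ∈ Finset.range N, d i ω with hG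
  have hGint : Integrable G μ := integrable_finset_sum _ fun i _ => hdint i
  have hG0 : ∫ ω, G ω ∂μ = 0 := by
    rw [show (fun ω => G ω) = G from rfl]
    show (∫ ω, ∑ i ∈ Finset.range N, d i ω ∂μ) = 0
    rw [integral_finset_sum _ fun i _ => hdint i]
    apply Finset.sum_eq_zero
    intro i _
    have : ∫ ω, d i ω ∂μ = (∫ ω, φ (i + 1) ω ∂μ) - ∫ ω, φ i ω ∂μ :=
      integral_sub (hint (i + 1)) (hint i)
    rw [this, hmean, hmean, sub_self]
  have hexp : ∀ ω, G ω ^ 2 = ∑ i ∈ Finset.range N, ∑ j ∈ Finset.range N, d i ω * d j ω := by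
    intro ω
    rw [sq, hG, Finset.sum_mul_sum]
  have hG2int : Integrable (fun ω => G ω ^ 2) μ := by
    rw [show (fun ω => G ω ^ 2)
        = fun ω => ∑ i ∈ Finset.range N, ∑ j ∈ Finset.range N, d i ω * d j ω from funext hexp]
    exact integrable_finset_sum _ fun i hi => integrable_finset_sum _ fun j hj =>
      hprod_int i hi j hj
  have hGsq : ∫ ω, G ω ^ 2 ∂μ = ∫ ω, ∑ i ∈ Finset.range N, d i ω ^ 2 ∂μ := by
    rw [show (fun ω => G ω ^ 2)
        = fun ω => ∑ i ∈ Finset.range N, ∑ j ∈ Finset.range N, d i ω * d j ω from funext hexp]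
    rw [integral_finset_sum _ fun i hi => integrable_finset_sum _ fun j hj =>
      hprod_int i hi j hj]
    rw [integral_finset_sum _ hsq_int]
    apply Finset.sum_congr rfl
    intro i hi
    rw [integral_finset_sum _ fun j hj => hprod_int i hi j hj]
    rw [Finset.sum_eq_single i]
    · congr 1
      funext ω
      rw [← pow_two]
    · intro j hj hne
      rcases hne.lt_or_gt with h | h
      · rw [show (fun ω => d i ω * d j ω) = fun ω => d j ω * d i ω from
          funext fun ω => mul_comm _ _]
        exact horth j i h (Finset.mem_range.mp hi)
      · exact horth i j h (Finset.mem_range.mp hj)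
    · intro hni
      exact absurd hi hni
  have key : ∫ ω, (φ N ω) ^ 2 ∂μ = x ^ 2 + ∫ ω, ∑ i ∈ Finset.range N, d i ω ^ 2 ∂μ := by
    have h1 : (fun ω => φ N ω ^ 2) = fun ω => (x ^ 2 + 2 * x * G ω) + G ω ^ 2 :=
      funext fun ω => by rw [hφN ω]; show _ = _ + (∑ i ∈ Finset.range N, d i ω) ^ 2; ring
    rw [show (fun ω => (φ N ω) ^ 2) = fun ω => (x ^ 2 + 2 * x * G ω) + G ω ^ 2 from h1]
    have hint2 : Integrable (fun _ω : X => x ^ 2) μ := integrable_const _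
    have hint3 : Integrable (fun ω => 2 * x * G ω) μ := hGint.const_mul (2 * x)
    have hint1 : Integrable (fun ω => x ^ 2 + 2 * x * G ω) μ := hint2.add hint3
    rw [integral_add hint1 hG2int]
    rw [integral_add hint2 hint3]
    rw [integral_const_mul, hG0, integral_const, hGsq]
    simp
  have hF_int : Integrable (fun ω => ∑ i ∈ Finset.range N, d i ω ^ 2) μ :=
    integrable_finset_sum _ hsq_int
  have hF_nonneg : 0 ≤ ∫ ω, ∑ i ∈ Finset.range N, d i ω ^ 2 ∂μ :=
    integral_nonneg fun ω => Finset.sum_nonneg fun i _ => sq_nonneg _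
  have hF_le : ∫ ω, ∑ i ∈ Finset.range N, d i ω ^ 2 ∂μ ≤ 1 - z ^ 2 := by
    have := integral_mono_ae hF_int (integrable_const (1 - z ^ 2)) hS'
    rwa [integral_const, probReal_univ, one_smul] at this
  refine ⟨by rw [← hy, key]; linarith, by rw [← hy, key]; linarith, ?_⟩
  rw [show (fun ω => ∑' n, (φ (n + 1) ω - φ n ω) ^ 2)
    = fun ω => ∑ i ∈ Finset.range N, d i ω ^ 2 from funext htsum]
  rw [hmean N, key]
  ring


lemma part_b [IsProbabilityMeasure μ]
    (hsplit : ∀ s : Set X, MeasurableSet s → 0 < μ s →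
        ∃ t : Set X, t ⊆ s ∧ MeasurableSet t ∧ 0 < μ t ∧ μ t < μ s)
    (x y z : ℝ) (hxy : x ^ 2 ≤ y) (hyz : y ≤ 1 - z ^ 2 + x ^ 2) (hz0 : 0 ≤ z) (hz1 : z ≤ 1) :
    ∃ (ℱ : Filtration ℕ m) (φ : ℕ → X → ℝ) (N : ℕ),
      ℱ 0 = ⊥ ∧ Martingale φ ℱ μ ∧ (∀ n, N ≤ n → φ n = φ N) ∧
      φ 0 = (fun _ => x) ∧
      (∫ ω, (φ N ω) ^ 2 ∂μ) = y ∧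
      (∀ᵐ ω ∂μ, (∑' n, (φ (n + 1) ω - φ n ω) ^ 2) ≤ 1 - z ^ 2) := by
  classical
  obtain ⟨A, hAm, hA⟩ := exists_measure_half hsplit
  have hv : 0 ≤ y - x ^ 2 := by linarith
  set a : ℝ := Real.sqrt (y - x ^ 2) with ha
  have ha2 : a ^ 2 = y - x ^ 2 := Real.sq_sqrt hv
  set f : X → ℝ := A.piecewise (fun _ => x + a) (fun _ => x - a) with hf
  have hfm : StronglyMeasurable[m] f :=
    (Measurable.piecewise hAm measurable_const measurable_const).stronglyMeasurable
  have hfb : ∀ ω, ‖f ω‖ ≤ |x| + |a| := by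
    intro ω
    by_cases h : ω ∈ A <;>
      simp only [hf, Set.piecewise, h, if_true, if_false, Real.norm_eq_abs] <;>
      [exact (abs_add_le _ _).trans le_rfl; exact (abs_sub _ _).trans le_rfl]
  have hf_int : Integrable f μ :=
    ⟨hfm.aestronglyMeasurable, HasFiniteIntegral.of_bounded (ae_of_all _ hfb)⟩
  have hμAc : μ Aᶜ = 1 / 2 := by
    rw [prob_compl_eq_one_sub hAm, hA, ENNReal.sub_half ENNReal.one_ne_top]
  have htoReal : ((1 : ℝ≥0∞) / 2).toReal = (1 / 2 : ℝ) := by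
    rw [ENNReal.toReal_div]; simp
  have hdecomp : f = fun ω => A.indicator (fun _ => x + a) ω + Aᶜ.indicator (fun _ => x - a) ω := by
    funext ω
    by_cases h : ω ∈ A <;> simp [hf, Set.piecewise, Set.indicator, h]
  have hintf : ∫ ω, f ω ∂μ = x := by
    rw [hdecomp, integral_add ((integrable_const _).indicator hAm)
      ((integrable_const _).indicator hAm.compl),
      integral_indicator_const _ hAm, integral_indicator_const _ hAm.compl, measureReal_def, measureReal_def, hA, hμAc, htoReal, smul_eq_mul, smul_eq_mul]
    ring
  have hdecomp2 : (fun ω => f ω ^ 2)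
      = fun ω => A.indicator (fun _ => (x + a) ^ 2) ω + Aᶜ.indicator (fun _ => (x - a) ^ 2) ω := by
    funext ω
    by_cases h : ω ∈ A <;> simp [hf, Set.piecewise, Set.indicator, h]
  have hintf2 : ∫ ω, f ω ^ 2 ∂μ = y := by
    rw [hdecomp2, integral_add ((integrable_const _).indicator hAm)
      ((integrable_const _).indicator hAm.compl),
      integral_indicator_const _ hAm, integral_indicator_const _ hAm.compl, measureReal_def, measureReal_def, hA, hμAc, htoReal, smul_eq_mul, smul_eq_mul]
    nlinarith [ha2]
  -- σ-algebra generated by A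
  set 𝒢 : MeasurableSpace X := MeasurableSpace.generateFrom {A} with h𝒢def
  have h𝒢 : 𝒢 ≤ m := by
    rw [h𝒢def]
    apply MeasurableSpace.generateFrom_le
    rintro s rfl
    exact hAm
  have hA𝒢 : MeasurableSet[𝒢] A := MeasurableSpace.measurableSet_generateFrom rfl
  have hf𝒢 : StronglyMeasurable[𝒢] f := by
    have h1 : Measurable[𝒢] f := Measurable.piecewise hA𝒢 measurable_const measurable_const
    exact h1.stronglyMeasurable
  -- the filtration and martingale
  refine ⟨⟨fun n => Nat.casesOn n ⊥ fun _ => 𝒢, ?_, ?_⟩,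
    fun n => Nat.casesOn n (fun _ => x) fun _ => f, 1, rfl, ⟨?_, ?_⟩, ?_, rfl, hintf2, ?_⟩
  · -- monotone
    intro i j hij
    cases i with
    | zero => exact bot_le
    | succ k =>
      cases j with
      | zero => omega
      | succ l => exact le_rfl
  · -- le m
    intro i
    cases i with
    | zero => exact bot_le
    | succ k => exact h𝒢
  · -- adapted
    intro n
    cases n with
    | zero => exact stronglyMeasurable_const
    | succ k => exact hf𝒢
  · -- martingale property
    intro i j hij
    cases j with
    | zero =>
      have hi0 : i = 0 := Nat.le_zero.mp hij
      subst hi0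
      show μ[(fun _ => x : X → ℝ)|⊥] =ᵐ[μ] fun _ => x
      rw [condExp_const bot_le]
    | succ l =>
      cases i with
      | zero =>
        show μ[f|⊥] =ᵐ[μ] fun _ => x
        rw [condExp_bot, hintf]
      | succ k =>
        show μ[f|𝒢] =ᵐ[μ] f
        rw [condExp_of_stronglyMeasurable h𝒢 hf𝒢 hf_int]
  · -- stationary from 1
    intro n hn
    cases n with
    | zero => omega
    | succ k => rfl
  · -- square function bound
    refine ae_of_all _ fun ω => ?_
    have hts : (∑' n, ((Nat.casesOn (n + 1) (fun _ => x) fun _ => f : X → ℝ) ω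
        - (Nat.casesOn n (fun _ => x) fun _ => f : X → ℝ) ω) ^ 2) = (f ω - x) ^ 2 := by
      apply tsum_eq_single 0
      intro b hb
      cases b with
      | zero => omega
      | succ k => simp
    rw [hts]
    have : (f ω - x) ^ 2 = a ^ 2 := by
      by_cases h : ω ∈ A <;> simp only [hf, Set.piecewise, h, if_true, if_false] <;> ring
    rw [this, ha2]
    linarith

end Aux

open MeasureTheory Filter

/-- Characterization of the natural domain
`Ω = {(x,y,z) : x² ≤ y ≤ 1 − z² + x², z ∈ [0,1]}`.
(a) If a simple martingale has `φ₀ = x`, `E φ_∞² = y` and `(Sφ)² ≤ 1 − z²` a.s. with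
`z ∈ [0,1]`, then `x² ≤ y ≤ 1 − z² + x²` and `E φ_∞² − (E φ_∞)² = E (Sφ)²`.
(b) Conversely, on an atomless probability space every point of `Ω` is attained by
such a simple martingale. -/
theorem natural_domain_characterization
    {X : Type*} {m : MeasurableSpace X} {μ : Measure X} [IsProbabilityMeasure μ] :
    (∀ (ℱ : Filtration ℕ m), ℱ 0 = ⊥ →
      ∀ (φ : ℕ → X → ℝ), Martingale φ ℱ μ →
      ∀ N : ℕ, (∀ n, N ≤ n → φ n = φ N) →
      ∀ x y z : ℝ, 0 ≤ z → z ≤ 1 →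
        φ 0 = (fun _ => x) →
        (∫ ω, (φ N ω) ^ 2 ∂μ) = y →
        (∀ᵐ ω ∂μ, (∑' n, (φ (n + 1) ω - φ n ω) ^ 2) ≤ 1 - z ^ 2) →
        (x ^ 2 ≤ y ∧ y ≤ 1 - z ^ 2 + x ^ 2 ∧
          (∫ ω, (φ N ω) ^ 2 ∂μ) - (∫ ω, φ N ω ∂μ) ^ 2 =
            ∫ ω, (∑' n, (φ (n + 1) ω - φ n ω) ^ 2) ∂μ))
    ∧
    ((∀ s : Set X, MeasurableSet s → 0 < μ s →
        ∃ t : Set X, t ⊆ s ∧ MeasurableSet t ∧ 0 < μ t ∧ μ t < μ s) →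
      ∀ x y z : ℝ, x ^ 2 ≤ y → y ≤ 1 - z ^ 2 + x ^ 2 → 0 ≤ z → z ≤ 1 →
        ∃ (ℱ : Filtration ℕ m) (φ : ℕ → X → ℝ) (N : ℕ),
          ℱ 0 = ⊥ ∧ Martingale φ ℱ μ ∧ (∀ n, N ≤ n → φ n = φ N) ∧
          φ 0 = (fun _ => x) ∧
          (∫ ω, (φ N ω) ^ 2 ∂μ) = y ∧
          (∀ᵐ ω ∂μ, (∑' n, (φ (n + 1) ω - φ n ω) ^ 2) ≤ 1 - z ^ 2)) := by
  constructor
  · intro ℱ hℱ0 φ hφ N hstat x y z hz0 hz1 hφ0 hy hS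
    exact part_a ℱ hℱ0 φ hφ N hstat x y z hz0 hz1 hφ0 hy hS
  · intro hsplit x y z hxy hyz hz0 hz1
    exact part_b hsplit x y z hxy hyz hz0 hz1
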